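/- Let P and Q be orthogonal projections on a finite-dimensional complex Hilbert space. Then there exists an orthonormal basis {pᵢ} of the range of P such that ⟨pᵢ, Q pⱼ⟩ = 0 whenever i ≠ j. -/

import Mathlib

/-- **A basis of the range of `P` that `Q` keeps orthogonal.**
If `P` and `Q` are orthogonal projections on a finite-dimensional complex Hilbert space,
then there is an orthonormal basis `{p i}` of the range of `P` such that
`⟨p i, Q (p j)⟩ = 0` whenever `i ≠ j`. -/
theorem stmt_8 {H : Type*} [NormedAddCommGroup H] [InnerProductSpace ℂ H]
    [FiniteDimensional ℂ H] (P Q : H →L[ℂ] H)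
    (hP₁ : IsIdempotentElem P) (hP₂ : IsSelfAdjoint P)
    (hQ₁ : IsIdempotentElem Q) (hQ₂ : IsSelfAdjoint Q) :
    ∃ (d : ℕ) (p : Fin d → H),
      Orthonormal ℂ p ∧
      Submodule.span ℂ (Set.range p) = LinearMap.range (P : H →ₗ[ℂ] H) ∧
      (∀ i j : Fin d, i ≠ j → (inner ℂ (p i) (Q (p j)) : ℂ) = 0) := by
  set V : Submodule ℂ H := LinearMap.range (P : H →ₗ[ℂ] H) with hV
  -- P fixes elements of its range
  have hfix : ∀ x : H, x ∈ V → P x = x := by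
    rintro x ⟨y, rfl⟩
    have : P ((P : H →ₗ[ℂ] H) y) = (P * P) y := rfl
    rw [this, hP₁]; rfl
  -- P is symmetric
  have hPsymm : ∀ x y : H, (inner ℂ (P x) y : ℂ) = inner ℂ x (P y) := by
    intro x y
    nth_rewrite 1 [← hP₂.adjoint_eq]
    exact ContinuousLinearMap.adjoint_inner_left P y x
  -- the operator T = P Q restricted to V
  let T : V →ₗ[ℂ] V :=
    { toFun := fun x => ⟨P (Q x), LinearMap.mem_range_self (P : H →ₗ[ℂ] H) _⟩
      map_add' := by intro x y; ext; simp
      map_smul' := by intro c x; ext; simp }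
  have hT : T.IsSymmetric := by
    intro x y
    have hx : P (x : H) = x := hfix _ x.2
    have hy : P (y : H) = y := hfix _ y.2
    have hQsymm : (inner ℂ (Q (x : H)) (y : H) : ℂ) = inner ℂ (x : H) (Q y) := by
      nth_rewrite 1 [← hQ₂.adjoint_eq]
      exact ContinuousLinearMap.adjoint_inner_left Q _ _
    calc (inner ℂ (T x) y : ℂ) = inner ℂ (P (Q (x : H))) (y : H) := rfl
      _ = inner ℂ (Q (x : H)) (P (y : H)) := hPsymm _ _
      _ = inner ℂ (Q (x : H)) (y : H) := by rw [hy]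
      _ = inner ℂ (x : H) (Q (y : H)) := hQsymm
      _ = inner ℂ (P (x : H)) (Q (y : H)) := by rw [hx]
      _ = inner ℂ (x : H) (P (Q (y : H))) := hPsymm _ _
      _ = inner ℂ x (T y) := rfl
  set d := Module.finrank ℂ V with hd
  let b := hT.eigenvectorBasis rfl
  refine ⟨d, fun i => (b i : H), ?_, ?_, ?_⟩
  · have := b.orthonormal
    rw [orthonormal_iff_ite] at this ⊢
    intro i j
    simpa [Submodule.coe_inner] using this i j
  · have hspan : Submodule.span ℂ (Set.range b) = ⊤ := b.toBasis.span_eq.symm ▸ by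
      simp [OrthonormalBasis.coe_toBasis]
    have : Submodule.span ℂ (Set.range fun i => ((b i : H))) =
        Submodule.map V.subtype (Submodule.span ℂ (Set.range b)) := by
      rw [Submodule.map_span]
      congr 1
      ext x
      simp [Set.range_comp]
    rw [this, hspan, Submodule.map_top, Submodule.range_subtype]
  · intro i j hij
    have hbj := hT.apply_eigenvectorBasis rfl j
    have hPQ : P (Q (b j : H)) = (hT.eigenvalues rfl j : ℂ) • (b j : H) :=
      congrArg Subtype.val hbj
    have hbi : P ((b i : H)) = (b i : H) := hfix _ (b i).2
    have horth : (inner ℂ ((b i : H)) ((b j : H)) : ℂ) = 0 := by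
      have := b.orthonormal
      rw [orthonormal_iff_ite] at this
      have h := this i j
      rw [if_neg hij, Submodule.coe_inner] at h
      exact h
    calc (inner ℂ ((b i : H)) (Q ((b j : H))) : ℂ)
        = inner ℂ (P (b i : H)) (Q ((b j : H))) := by rw [hbi]
      _ = inner ℂ ((b i : H)) (P (Q ((b j : H)))) := hPsymm _ _
      _ = inner ℂ ((b i : H)) ((hT.eigenvalues rfl j : ℂ) • ((b j : H))) := by rw [hPQ]
      _ = (hT.eigenvalues rfl j : ℂ) * inner ℂ ((b i : H)) ((b j : H)) := inner_smul_right _ _ _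
      _ = 0 := by rw [horth, mul_zero]
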